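/- arXiv:1606.06388 — 3 statements merged into one kernel-verified Lean document; each statement's English description precedes it below -/
import Mathlib

section
/- For all integers k, j ≥ 0 and n, m ≥ 1, the basis functions Ψ_k^n(r,θ) = ((2k+β_n)/(k+β_n))·J_k^{−1,β_n}(2r²−1)·r^{β_n}·sin(nγθ) satisfy the Sobolev orthogonality relation a(Ψ_k^n, Ψ_j^m) = (π/(2γ))·δ_{m,n}·δ_{k,j}·(2k+β_n)·(2−δ_{k,0}), where δ denotes the Kronecker delta. -/
open Real MeasureTheory

/-- Generalized binomial coefficient `C(x,k) = x(x-1)⋯(x-k+1)/k!`. -/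
noncomputable def genBinom (x : ℝ) (k : ℕ) : ℝ :=
  (descPochhammer ℝ k).eval x / (Nat.factorial k : ℝ)

/-- Generalized Jacobi polynomial `J_n^{α,β}(ζ)`. -/
noncomputable def genJacobi (α β : ℝ) (n : ℕ) (ζ : ℝ) : ℝ :=
  ∑ m ∈ Finset.range (n + 1),
    genBinom ((n : ℝ) + α) (n - m) * genBinom ((n : ℝ) + β) m *
      ((ζ - 1) / 2) ^ m * ((ζ + 1) / 2) ^ (n - m)


/-- `β_n = √(c² + γ²n²)`. -/
noncomputable def betaN (γ c : ℝ) (n : ℕ) : ℝ := Real.sqrt (c ^ 2 + γ ^ 2 * (n : ℝ) ^ 2)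


/-- The basis function `Ψ_k^n(r,θ)` on the circular sector. -/
noncomputable def Psi (γ c : ℝ) (k n : ℕ) (r θ : ℝ) : ℝ :=
  ((2 * (k : ℝ) + betaN γ c n) / ((k : ℝ) + betaN γ c n)) *
    genJacobi (-1) (betaN γ c n) k (2 * r ^ 2 - 1) * r ^ (betaN γ c n) *
    Real.sin ((n : ℝ) * γ * θ)

section Auxiliary

open Finset Polynomial intervalIntegral


noncomputable def dP (x : ℝ) (k : ℕ) : ℝ := (descPochhammer ℝ k).eval x

lemma dP_zero (x : ℝ) : dP x 0 = 1 := by simp [dP]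

lemma dP_succ (x : ℝ) (k : ℕ) : dP x (k+1) = dP x k * (x - k) := by
  simp [dP, descPochhammer_succ_right]

lemma dP_succ_left (x : ℝ) (k : ℕ) : dP x (k+1) = x * dP (x-1) k := by
  simp [dP, descPochhammer_succ_left]

lemma dP_eq_prod (x : ℝ) (k : ℕ) : dP x k = ∏ i ∈ range k, (x - i) := by
  induction k with
  | zero => simp [dP_zero]
  | succ k ih => rw [dP_succ, ih, prod_range_succ]

lemma dP_one (x : ℝ) : dP x 1 = x := by rw [show (1:ℕ) = 0+1 from rfl, dP_succ, dP_zero]; ring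

lemma genBinom_eq (x : ℝ) (k : ℕ) : genBinom x k = dP x k / (Nat.factorial k : ℝ) := rfl

lemma genBinom_zero (x : ℝ) : genBinom x 0 = 1 := by simp [genBinom]

lemma genBinom_mul_factorial (x : ℝ) (k : ℕ) : genBinom x k * (Nat.factorial k : ℝ) = dP x k := by
  rw [genBinom_eq, div_mul_cancel₀]
  exact_mod_cast Nat.factorial_ne_zero k

lemma succ_mul_genBinom (x : ℝ) (k : ℕ) :
    (k+1 : ℝ) * genBinom x (k+1) = (x - k) * genBinom x k := by
  rw [genBinom_eq, genBinom_eq, dP_succ, Nat.factorial_succ]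
  have h1 : ((k+1) * Nat.factorial k : ℕ) = ((k:ℝ)+1) * (Nat.factorial k : ℝ) := by push_cast; ring
  rw [h1]
  have h2 : (Nat.factorial k : ℝ) ≠ 0 := by exact_mod_cast Nat.factorial_ne_zero k
  field_simp

lemma genBinom_pascal (x : ℝ) (k : ℕ) :
    genBinom (x+1) (k+1) = genBinom x (k+1) + genBinom x k := by
  have h2 : (Nat.factorial (k+1) : ℝ) ≠ 0 := by exact_mod_cast Nat.factorial_ne_zero (k+1)
  have hd : dP (x+1) (k+1) = dP x (k+1) + (k+1) * dP x k := by
    rw [dP_succ_left, dP_succ]; ring_nf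
  rw [genBinom_eq, genBinom_eq, genBinom_eq, hd, add_div]
  congr 1
  rw [Nat.factorial_succ]
  push_cast
  rw [mul_comm ((k:ℝ)+1) _, ← div_div, mul_div_assoc]
  rw [div_self (by positivity), mul_one]

/-- Vandermonde: `∑ C(N, K-m) G(x,m) = G(x+N, K)`. -/
lemma genBinom_vandermonde (N : ℕ) : ∀ (K : ℕ) (x : ℝ),
    ∑ m ∈ range (K+1), (N.choose (K-m) : ℝ) * genBinom x m = genBinom (x + N) K := by
  induction N with
  | zero =>
    intro K x
    rw [Finset.sum_eq_single K]
    · simp [genBinom]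
    · intro b hb hbK
      have hb' : b < K + 1 := Finset.mem_range.mp hb
      have : K - b ≠ 0 := by omega
      simp [Nat.choose_eq_zero_of_lt (by omega : (0:ℕ) < K - b), this]
    · intro h; exact absurd (Finset.self_mem_range_succ K) h
  | succ N ih =>
    intro K x
    cases K with
    | zero => simp [genBinom]
    | succ K =>
      rw [Finset.sum_range_succ]
      have hsplit : ∀ m ∈ range (K+1), ((N+1).choose (K+1-m) : ℝ) * genBinom x m
          = (N.choose (K+1-m) : ℝ) * genBinom x m + (N.choose (K-m) : ℝ) * genBinom x m := by
        intro m hm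
        have hm' : m ≤ K := Nat.lt_succ_iff.mp (Finset.mem_range.mp hm)
        have : K + 1 - m = (K - m) + 1 := by omega
        rw [this, Nat.choose_succ_succ]
        push_cast
        ring
      rw [Finset.sum_congr rfl hsplit, Finset.sum_add_distrib]
      have h1 : ∑ m ∈ range (K+2), (N.choose (K+1-m) : ℝ) * genBinom x m
          = ∑ m ∈ range (K+1), (N.choose (K+1-m) : ℝ) * genBinom x m + genBinom x (K+1) := by
        rw [Finset.sum_range_succ]
        norm_num
      have h2 := ih (K+1) x
      have h3 := ih K x
      have hx : x + ((N:ℕ)+1 : ℕ) = (x + N) + 1 := by push_cast; ring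
      rw [hx, genBinom_pascal, ← h2, ← h3, h1]
      norm_num
      ring


lemma partial_fraction_sum : ∀ (m : ℕ) (E : ℝ), 0 < E →
    ∑ s ∈ range (m+1), (-1:ℝ)^(m-s) * (m.choose s : ℝ) / (E+s)
      = (-1:ℝ)^m * (Nat.factorial m : ℝ) / ∏ i ∈ range (m+1), (E+i) := by
  intro m
  induction m with
  | zero => intro E hE; simp
  | succ m ih =>
    intro E hE
    have hE1 : (0:ℝ) < E + 1 := by linarith
    set f : ℕ → ℝ := fun s => (-1:ℝ)^(m+1-s) * ((m+1).choose s : ℝ) / (E+s) with hf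
    set g : ℕ → ℝ := fun s => (-1:ℝ)^(m-s) * (m.choose s : ℝ) / (E+s) with hg
    set g1 : ℕ → ℝ := fun s => (-1:ℝ)^(m-s) * (m.choose s : ℝ) / ((E+1)+s) with hg1
    have key : ∑ s ∈ range (m+2), f s = (∑ s ∈ range (m+1), g1 s) - ∑ s ∈ range (m+1), g s := by
      rw [Finset.sum_range_succ' f (m+1)]
      have h2 : ∑ i ∈ range (m+1), (-1:ℝ)^(m-i) * ((m.choose (i+1)) : ℝ) / (E+((i+1:ℕ):ℝ))
          = - (∑ s ∈ range (m+1), g s) - f 0 := by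
        have h3 : ∑ s ∈ range (m+2), (-1:ℝ)^(m+1-s) * (m.choose s : ℝ) / (E+s)
            = (∑ i ∈ range (m+1), (-1:ℝ)^(m+1-(i+1)) * (m.choose (i+1) : ℝ) / (E+((i+1:ℕ):ℝ)))
              + (-1:ℝ)^(m+1-0) * (m.choose 0 : ℝ) / (E+((0:ℕ):ℝ)) :=
          Finset.sum_range_succ' _ (m+1)
        have h4 : ∑ s ∈ range (m+2), (-1:ℝ)^(m+1-s) * (m.choose s : ℝ) / (E+s)
            = - ∑ s ∈ range (m+1), g s := by
          rw [Finset.sum_range_succ]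
          rw [Nat.choose_eq_zero_of_lt (Nat.lt_succ_self m)]
          rw [← Finset.sum_neg_distrib]
          simp only [Nat.cast_zero, zero_div, mul_zero, add_zero]
          apply Finset.sum_congr rfl
          intro s hs
          have hs' : s < m+1 := Finset.mem_range.mp hs
          have hms : m + 1 - s = (m - s) + 1 := by omega
          rw [hg]
          simp only
          rw [hms, pow_succ]
          ring
        have h6 : ∀ i ∈ range (m+1), (-1:ℝ)^(m+1-(i+1)) * (m.choose (i+1) : ℝ) / (E+((i+1:ℕ):ℝ))
            = (-1:ℝ)^(m-i) * (m.choose (i+1) : ℝ) / (E+((i+1:ℕ):ℝ)) := by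
          intro i hi
          have : m + 1 - (i+1) = m - i := by omega
          rw [this]
        rw [Finset.sum_congr rfl h6] at h3
        rw [h4] at h3
        have hf0 : f 0 = (-1:ℝ)^(m+1-0) * (m.choose 0 : ℝ) / (E+((0:ℕ):ℝ)) := by
          rw [hf]; simp
        rw [hf0]
        linarith [h3]
      have hsp : ∀ i ∈ range (m+1), f (i+1)
          = g1 i + (-1:ℝ)^(m-i) * (m.choose (i+1) : ℝ) / (E+((i+1:ℕ):ℝ)) := by
        intro i hi
        rw [hf, hg1]
        simp only
        have : m + 1 - (i+1) = m - i := by omega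
        rw [this, Nat.choose_succ_succ]
        push_cast
        rw [show E + ((i:ℝ)+1) = (E+1) + i by ring]
        ring
      rw [Finset.sum_congr rfl hsp, Finset.sum_add_distrib, h2]
      ring
    rw [key]
    have ih1 := ih (E+1) hE1
    have ih2 := ih E hE
    rw [hg1, hg] at *
    rw [ih1, ih2]
    set Q1 : ℝ := ∏ i ∈ range (m+1), ((E+1)+i) with hQ1
    set Q2 : ℝ := ∏ i ∈ range (m+1), (E+i) with hQ2
    set Q : ℝ := ∏ i ∈ range (m+2), (E+i) with hQ
    have hq1 : (0:ℝ) < Q1 := by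
      rw [hQ1]; apply Finset.prod_pos; intro i _
      have : (0:ℝ) ≤ i := Nat.cast_nonneg i; linarith
    have hq2 : (0:ℝ) < Q2 := by
      rw [hQ2]; apply Finset.prod_pos; intro i _
      have : (0:ℝ) ≤ i := Nat.cast_nonneg i; linarith
    have hqq : (0:ℝ) < Q := by
      rw [hQ]; apply Finset.prod_pos; intro i _
      have : (0:ℝ) ≤ i := Nat.cast_nonneg i; linarith
    have hp1 : Q = E * Q1 := by
      rw [hQ, hQ1, Finset.prod_range_succ' (fun i => E + (i:ℝ)) (m+1)]
      rw [mul_comm]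
      congr 1
      · norm_num
      · apply Finset.prod_congr rfl
        intro i _
        push_cast
        ring
    have hp2 : Q = Q2 * (E+(m+1)) := by
      rw [hQ, hQ2, Finset.prod_range_succ]
      push_cast
      ring_nf
    rw [div_sub_div _ _ hq1.ne' hq2.ne', div_eq_div_iff (mul_pos hq1 hq2).ne' hqq.ne']
    rw [Nat.factorial_succ]
    push_cast
    linear_combination ((-1:ℝ)^m * (m.factorial:ℝ) * Q2) * hp1 - ((-1:ℝ)^m * (m.factorial:ℝ) * Q1) * hp2


/-- Chu–Vandermonde-type identity. -/
lemma chu_vandermonde : ∀ (P : ℕ) (x y : ℝ), (∀ i : ℕ, i ≤ P + 1 → y - i ≠ 0) →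
    ∑ m ∈ range (P+1), (-1:ℝ)^m * (P.choose m : ℝ) * dP x m / dP y (m+1)
      = (∏ i ∈ range P, (y - x - 1 - i)) / dP y (P+1) := by
  intro P
  induction P with
  | zero =>
    intro x y hy
    simp [dP_one, dP_zero]
  | succ P ih =>
    intro x y hy
    have hy0 : y ≠ 0 := by
      have := hy 0 (by omega); simpa using this
    set f : ℕ → ℝ := fun m => (-1:ℝ)^m * ((P+1).choose m : ℝ) * dP x m / dP y (m+1) with hf
    have key : ∑ m ∈ range (P+2), f m
        = (∑ m ∈ range (P+1), (-1:ℝ)^m * (P.choose m : ℝ) * dP x m / dP y (m+1))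
          - (x/y) * ∑ m ∈ range (P+1), (-1:ℝ)^m * (P.choose m : ℝ) * dP (x-1) m / dP (y-1) (m+1) := by
      rw [Finset.sum_range_succ' f (P+1)]
      have hsp : ∀ i ∈ range (P+1), f (i+1)
          = (-1:ℝ)^(i+1) * (P.choose (i+1) : ℝ) * dP x (i+1) / dP y (i+2)
            - (x/y) * ((-1:ℝ)^i * (P.choose i : ℝ) * dP (x-1) i / dP (y-1) (i+1)) := by
        intro i hi
        rw [hf]
        simp only
        rw [Nat.choose_succ_succ]
        have e1 : dP x (i+1) = x * dP (x-1) i := dP_succ_left x i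
        have e2 : dP y (i+1+1) = y * dP (y-1) (i+1) := dP_succ_left y (i+1)
        have hyd : dP (y-1) (i+1) ≠ 0 := by
          rw [dP_eq_prod]
          apply Finset.prod_ne_zero_iff.mpr
          intro a ha
          have ha' : a < i + 1 := Finset.mem_range.mp ha
          have := hy (a+1) (by have := Finset.mem_range.mp hi; omega)
          intro hcon
          apply this
          push_cast
          linarith [hcon]
        rw [e2, e1]
        push_cast
        field_simp
        ring
      rw [Finset.sum_congr rfl hsp, Finset.sum_sub_distrib, ← Finset.mul_sum]
      have hlast : ∑ i ∈ range (P+1), (-1:ℝ)^(i+1) * (P.choose (i+1) : ℝ) * dP x (i+1) / dP y (i+2)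
          = (∑ m ∈ range (P+1), (-1:ℝ)^m * (P.choose m : ℝ) * dP x m / dP y (m+1)) - f 0 := by
        have h3 : ∑ m ∈ range (P+2), (-1:ℝ)^m * (P.choose m : ℝ) * dP x m / dP y (m+1)
            = (∑ i ∈ range (P+1), (-1:ℝ)^(i+1) * (P.choose (i+1) : ℝ) * dP x (i+1) / dP y (i+1+1))
              + (-1:ℝ)^0 * (P.choose 0 : ℝ) * dP x 0 / dP y (0+1) :=
          Finset.sum_range_succ' _ (P+1)
        have h4 : ∑ m ∈ range (P+2), (-1:ℝ)^m * (P.choose m : ℝ) * dP x m / dP y (m+1)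
            = ∑ m ∈ range (P+1), (-1:ℝ)^m * (P.choose m : ℝ) * dP x m / dP y (m+1) := by
          rw [Finset.sum_range_succ]
          rw [Nat.choose_eq_zero_of_lt (Nat.lt_succ_self P)]
          simp
        have hf0 : f 0 = (-1:ℝ)^0 * (P.choose 0 : ℝ) * dP x 0 / dP y (0+1) := by
          rw [hf]; simp
        rw [h4] at h3
        rw [hf0]
        linarith [h3]
      rw [hlast]
      ring
    rw [key, ih x y (fun i hi => hy i (by omega)), ih (x-1) (y-1) ?side]
    case side =>
      intro i hi
      have := hy (i+1) (by omega)
      intro hcon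
      apply this
      push_cast
      linarith [hcon]
    -- now algebra
    have hNeq : ∏ i ∈ range P, ((y-1) - (x-1) - 1 - i) = ∏ i ∈ range P, (y - x - 1 - i) := by
      apply Finset.prod_congr rfl; intro i _; ring
    rw [hNeq]
    set N : ℝ := ∏ i ∈ range P, (y - x - 1 - i) with hN
    have e2 := dP_succ_left y (P+1)
    have e3 := dP_succ y (P+1)
    push_cast at e3
    have hdy1 : dP y (P+1) ≠ 0 := by
      rw [dP_eq_prod]
      apply Finset.prod_ne_zero_iff.mpr
      intro a ha
      exact hy a (by have := Finset.mem_range.mp ha; omega)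
    have hdy2 : dP (y-1) (P+1) ≠ 0 := by
      rw [dP_eq_prod]
      apply Finset.prod_ne_zero_iff.mpr
      intro a ha
      have := hy (a+1) (by have := Finset.mem_range.mp ha; omega)
      intro hcon; apply this; push_cast; linarith [hcon]
    have hprod : ∏ i ∈ range (P+1), (y - x - 1 - i) = N * (y - x - 1 - P) := by
      rw [hN, Finset.prod_range_succ]
    rw [hprod]
    have hdy3 : dP y (P+1+1) ≠ 0 := by
      rw [e2]; exact mul_ne_zero hy0 hdy2
    field_simp
    push_cast
    linear_combination (N*(y-x-1-(P:ℝ))*dP y (P+1) - N * dP y (P+1+1)) * e2 + (N * dP y (P+1+1)) * e3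


lemma genBinom_nat (N k : ℕ) : genBinom (N : ℝ) k = (N.choose k : ℝ) := by
  rw [genBinom_eq]
  have : dP (N : ℝ) k = (N.descFactorial k : ℝ) := by
    rw [dP]; exact_mod_cast descPochhammer_eval_eq_descFactorial ℝ N k
  rw [this, Nat.descFactorial_eq_factorial_mul_choose]
  push_cast
  rw [mul_comm, mul_div_assoc, div_self (by exact_mod_cast Nat.factorial_ne_zero k), mul_one]

lemma genBinom_pred_self (k : ℕ) (hk : 1 ≤ k) : genBinom ((k:ℝ) - 1) k = 0 := by
  rw [genBinom_eq]
  have hc : ((k:ℝ) - 1) = ((k - 1 : ℕ) : ℝ) := by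
    have : (1:ℕ) ≤ k := hk
    push_cast [Nat.cast_sub this]
    ring
  rw [hc, dP]
  have := descPochhammer_eval_eq_descFactorial ℝ (k-1) k
  rw [this]
  have : (k-1).descFactorial k = 0 := Nat.descFactorial_eq_zero_iff_lt.mpr (by omega)
  rw [this]
  simp

/-- Shifted Jacobi polynomial `J_p^{0,b}(2t-1)` as a `Polynomial ℝ`. -/
noncomputable def SJ0 (b : ℝ) (p : ℕ) : Polynomial ℝ :=
  ∑ m ∈ range (p+1), C (genBinom (p : ℝ) (p-m) * genBinom ((p:ℝ) + b) m) * ((X - 1)^m * X^(p-m))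

/-- Shifted Jacobi polynomial `J_k^{-1,b}(2t-1)` as a `Polynomial ℝ`. -/
noncomputable def SJm (b : ℝ) (k : ℕ) : Polynomial ℝ :=
  ∑ m ∈ range (k+1), C (genBinom ((k:ℝ) - 1) (k-m) * genBinom ((k:ℝ) + b) m) * ((X - 1)^m * X^(k-m))

lemma natDegree_XsubC_pow_mul (m e : ℕ) : ((X - 1 : Polynomial ℝ)^m * X^e).natDegree = m + e := by
  have h1 : ((X - 1 : Polynomial ℝ)^m).natDegree = m := by
    rw [show (X - 1 : Polynomial ℝ) = X - C 1 by simp]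
    rw [natDegree_pow, natDegree_X_sub_C, mul_one]
  have hm : ((X - 1 : Polynomial ℝ)^m).Monic := (monic_X_sub_C 1).pow m
  rw [Monic.natDegree_mul (by simpa using hm) (monic_X_pow e), h1, natDegree_X_pow]

lemma monic_XsubC_pow_mul (m e : ℕ) : ((X - 1 : Polynomial ℝ)^m * X^e).Monic := by
  have hm : ((X - 1 : Polynomial ℝ)^m).Monic := by
    simpa using (monic_X_sub_C (1:ℝ)).pow m
  exact hm.mul (monic_X_pow e)

lemma SJ0_natDegree_le (b : ℝ) (p : ℕ) : (SJ0 b p).natDegree ≤ p := by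
  apply Polynomial.natDegree_sum_le_of_forall_le
  intro m hm
  apply le_trans (natDegree_mul_le)
  rw [natDegree_XsubC_pow_mul m (p-m), natDegree_C, zero_add]
  have := Finset.mem_range.mp hm
  omega


lemma SJ0_coeff_top (b : ℝ) (p : ℕ) : (SJ0 b p).coeff p = genBinom (2*(p:ℝ) + b) p := by
  rw [SJ0, finset_sum_coeff]
  have hterm : ∀ m ∈ range (p+1),
      (C (genBinom (p : ℝ) (p-m) * genBinom ((p:ℝ) + b) m) * ((X - 1)^m * X^(p-m))).coeff p
      = (p.choose (p-m) : ℝ) * genBinom ((p:ℝ) + b) m := by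
    intro m hm
    have hm' : m ≤ p := Nat.lt_succ_iff.mp (Finset.mem_range.mp hm)
    rw [coeff_C_mul]
    have hdeg : ((X - 1 : Polynomial ℝ)^m * X^(p-m)).natDegree = p := by
      rw [natDegree_XsubC_pow_mul]; omega
    have : ((X - 1 : Polynomial ℝ)^m * X^(p-m)).coeff p = 1 := by
      have := (monic_XsubC_pow_mul m (p-m)).leadingCoeff
      rwa [leadingCoeff, hdeg] at this
    rw [this, mul_one, genBinom_nat]
  rw [Finset.sum_congr rfl hterm]
  have : ∀ m ∈ range (p+1), (p.choose (p-m) : ℝ) * genBinom ((p:ℝ) + b) m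
      = (p.choose (p-m) : ℝ) * genBinom ((p:ℝ) + b) m := fun _ _ => rfl
  have hv : ∑ m ∈ range (p+1), (p.choose (p-m) : ℝ) * genBinom ((p:ℝ)+b) m
      = genBinom ((p:ℝ) + b + p) p := genBinom_vandermonde p p ((p:ℝ)+b)
  rw [hv]
  ring_nf

lemma SJm_eval_one (b : ℝ) (k : ℕ) : (SJm b k).eval 1 = if k = 0 then 1 else 0 := by
  rw [SJm, eval_finset_sum]
  have hterm : ∀ m ∈ range (k+1),
      eval 1 (C (genBinom ((k:ℝ) - 1) (k-m) * genBinom ((k:ℝ) + b) m) * ((X - 1)^m * X^(k-m)))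
      = if m = 0 then genBinom ((k:ℝ) - 1) k else 0 := by
    intro m hm
    rcases Nat.eq_zero_or_pos m with hm0 | hm0
    · subst hm0; simp [genBinom_zero]
    · have : eval (1:ℝ) ((X - 1)^m) = 0 := by
        simp [eval_pow]
        omega
      rw [eval_mul, eval_mul, this, zero_mul, mul_zero, if_neg (by omega)]
  rw [Finset.sum_congr rfl hterm, Finset.sum_ite_eq' (range (k+1)) 0]
  rw [if_pos (Finset.mem_range.mpr (Nat.succ_pos k))]
  rcases Nat.eq_zero_or_pos k with hk | hk
  · subst hk; simp [genBinom_zero]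
  · rw [genBinom_pred_self k hk, if_neg (by omega)]

lemma jacobi_coeff_rec (b : ℝ) (k m : ℕ) (hm : m < k) :
    (genBinom ((k:ℝ) - 1) (k-(m+1)) * genBinom ((k:ℝ) + b) (m+1)) * ((m+1:ℕ):ℝ)
    + (genBinom ((k:ℝ) - 1) (k-m) * genBinom ((k:ℝ) + b) m) * ((k-m:ℕ):ℝ)
    = ((k:ℝ) + b) * (genBinom (((k-1:ℕ)):ℝ) ((k-1)-m) * genBinom (((k-1:ℕ):ℝ) + (b+1)) m) := by
  have h1 : 1 ≤ k := by omega
  have hc1 : ((k-1:ℕ):ℝ) = (k:ℝ) - 1 := by rw [Nat.cast_sub h1, Nat.cast_one]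
  rw [hc1]
  have hc2 : (k:ℝ) - 1 + (b+1) = (k:ℝ) + b := by ring
  rw [hc2]
  have e1 : ((m:ℝ)+1) * genBinom ((k:ℝ)+b) (m+1) = ((k:ℝ)+b - m) * genBinom ((k:ℝ)+b) m :=
    succ_mul_genBinom ((k:ℝ)+b) m
  have hk1 : k - (m+1) = (k-1) - m := by omega
  have hk2 : k - m = ((k-1) - m) + 1 := by omega
  have hc3 : (((k-1) - m : ℕ):ℝ) = (k:ℝ) - 1 - m := by
    rw [Nat.cast_sub (by omega : m ≤ k - 1), Nat.cast_sub h1, Nat.cast_one]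
  have e2 := succ_mul_genBinom ((k:ℝ)-1) ((k-1)-m)
  have e2' : (((((k-1)-m) + 1:ℕ)):ℝ) * genBinom ((k:ℝ)-1) (((k-1)-m)+1)
      = (m:ℝ) * genBinom ((k:ℝ)-1) ((k-1)-m) := by
    rw [hc3] at e2
    push_cast
    rw [hc3]
    rw [show (k:ℝ) - 1 - ((k:ℝ)-1-m) = (m:ℝ) by ring] at e2
    linarith [e2]
  have hmc : ((m+1:ℕ):ℝ) = (m:ℝ)+1 := by push_cast; ring
  rw [hk1, hk2, hmc]
  linear_combination genBinom ((k:ℝ)-1) ((k-1)-m) * e1 + genBinom ((k:ℝ)+b) m * e2'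

lemma SJm_derivative (b : ℝ) (k : ℕ) (hk : 1 ≤ k) :
    derivative (SJm b k) = C ((k:ℝ) + b) * SJ0 (b+1) (k-1) := by
  rw [SJm, derivative_sum]
  have hterm : ∀ m ∈ range (k+1),
      derivative (C (genBinom ((k:ℝ) - 1) (k-m) * genBinom ((k:ℝ) + b) m) * ((X - 1)^m * X^(k-m)))
      = C ((genBinom ((k:ℝ) - 1) (k-m) * genBinom ((k:ℝ) + b) m) * ((m:ℕ):ℝ)) * ((X-1)^(m-1) * X^(k-m))
        + C ((genBinom ((k:ℝ) - 1) (k-m) * genBinom ((k:ℝ) + b) m) * ((k-m:ℕ):ℝ)) * ((X-1)^m * X^(k-m-1)) := by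
    intro m hm
    rw [derivative_C_mul, derivative_mul, derivative_pow, derivative_X_pow]
    have : derivative (X - 1 : Polynomial ℝ) = 1 := by
      rw [show (X - 1 : Polynomial ℝ) = X - C 1 by simp, derivative_sub, derivative_X, derivative_C, sub_zero]
    rw [this, mul_one]
    simp only [C_mul]
    ring
  rw [Finset.sum_congr rfl hterm, Finset.sum_add_distrib]
  -- first sum: peel m=0
  rw [Finset.sum_range_succ' (fun m => C ((genBinom ((k:ℝ) - 1) (k-m) * genBinom ((k:ℝ) + b) m) * ((m:ℕ):ℝ)) * ((X-1)^(m-1) * X^(k-m))) k]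
  -- second sum: peel m=k
  rw [Finset.sum_range_succ (fun m => C ((genBinom ((k:ℝ) - 1) (k-m) * genBinom ((k:ℝ) + b) m) * ((k-m:ℕ):ℝ)) * ((X-1)^m * X^(k-m-1))) k]
  simp only [Nat.cast_zero, mul_zero, map_zero, zero_mul, add_zero, Nat.sub_self]
  rw [SJ0, Finset.mul_sum]
  rw [← Finset.sum_add_distrib]
  have hrange : k - 1 + 1 = k := by omega
  rw [hrange]
  apply Finset.sum_congr rfl
  intro m hm
  have hm' : m < k := Finset.mem_range.mp hm
  have h1 : (m + 1) - 1 = m := by omega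
  have h2 : k - (m+1) = k - m - 1 := by omega
  rw [h1]
  have key := jacobi_coeff_rec b k m hm'
  rw [show k - (m+1) = (k-1) - m from by omega] at key ⊢
  rw [show k - m - 1 = (k-1) - m from by omega]
  rw [← add_mul, ← map_add, key, C_mul]
  ring

noncomputable def Jint (u : ℝ) (W : Polynomial ℝ) : ℝ :=
  ∫ r in (0:ℝ)..1, r ^ (u-1) * W.eval (r^2)

lemma Jint_integrable (u : ℝ) (hu : 0 < u) (W : Polynomial ℝ) :
    IntervalIntegrable (fun r => r ^ (u-1) * W.eval (r^2)) volume 0 1 := by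
  apply (intervalIntegrable_rpow' (by linarith : (-1:ℝ) < u - 1)).mul_continuousOn
  exact (Polynomial.continuous W).comp (continuous_pow 2) |>.continuousOn

lemma Jint_add (u : ℝ) (hu : 0 < u) (V W : Polynomial ℝ) :
    Jint u (V + W) = Jint u V + Jint u W := by
  unfold Jint
  rw [← intervalIntegral.integral_add (Jint_integrable u hu V) (Jint_integrable u hu W)]
  apply intervalIntegral.integral_congr
  intro r _
  simp [eval_add]
  ring

lemma Jint_C_mul (u : ℝ) (a : ℝ) (W : Polynomial ℝ) :
    Jint u (C a * W) = a * Jint u W := by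
  unfold Jint
  rw [← intervalIntegral.integral_const_mul]
  apply intervalIntegral.integral_congr
  intro r _
  simp [eval_mul]
  ring

lemma Jint_sum (u : ℝ) (hu : 0 < u) {ι : Type*} (s : Finset ι) (f : ι → Polynomial ℝ) :
    Jint u (∑ i ∈ s, f i) = ∑ i ∈ s, Jint u (f i) := by
  classical
  induction s using Finset.induction_on with
  | empty => simp [Jint]
  | insert _ _ h ih =>
    rw [Finset.sum_insert h, Finset.sum_insert h, Jint_add u hu, ih]

lemma Jint_monomial (u : ℝ) (hu : 0 < u) (i : ℕ) (a : ℝ) :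
    Jint u (monomial i a) = a / (u + 2*i) := by
  unfold Jint
  have h1 : ∀ r ∈ Set.Ioc (0:ℝ) 1, r ^ (u-1) * (monomial i a).eval (r^2)
      = a * r ^ (u - 1 + 2*i) := by
    intro r hr
    have hr0 : (0:ℝ) < r := hr.1
    rw [eval_monomial]
    rw [show ((r^2)^i : ℝ) = r ^ ((2*i : ℕ) : ℝ) by
      rw [Real.rpow_natCast]; push_cast; ring]
    rw [show r ^ (u-1) * (a * r ^ ((2*i:ℕ):ℝ)) = a * (r ^ (u-1) * r ^ ((2*i:ℕ):ℝ)) from by ring]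
    rw [← Real.rpow_add hr0]
    push_cast
    ring_nf
  have h2 : ∫ r in (0:ℝ)..1, r ^ (u-1) * (monomial i a).eval (r^2)
      = ∫ r in (0:ℝ)..1, a * r ^ (u - 1 + 2*i) := by
    apply intervalIntegral.integral_congr_ae
    filter_upwards [] with r
    intro hr
    rw [Set.uIoc_of_le (by norm_num : (0:ℝ) ≤ 1)] at hr
    exact h1 r hr
  rw [h2, intervalIntegral.integral_const_mul]
  have hi : (0:ℝ) ≤ 2*i := by positivity
  rw [integral_rpow (Or.inl (by linarith : (-1:ℝ) < u - 1 + 2*i))]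
  have he : u - 1 + 2*(i:ℝ) + 1 = u + 2*i := by ring
  have hpos : (0:ℝ) < u + 2*i := by linarith
  rw [he, Real.one_rpow, Real.zero_rpow hpos.ne']
  rw [sub_zero, ← mul_div_assoc, mul_one]

lemma Jint_X_pow (u : ℝ) (hu : 0 < u) (e : ℕ) : Jint u (X^e) = 1 / (u + 2*e) := by
  rw [X_pow_eq_monomial, Jint_monomial u hu]

lemma Jint_zero (u : ℝ) : Jint u 0 = 0 := by simp [Jint]

lemma Jint_shift (u : ℝ) (hu : 0 < u) (W : Polynomial ℝ) :
    Jint u (X^2 * W) = Jint (u+4) W := by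
  induction W using Polynomial.induction_on' with
  | add p q hp hq =>
    rw [mul_add, Jint_add u hu, Jint_add (u+4) (by linarith), hp, hq]
  | monomial i a =>
    have : (X^2 : Polynomial ℝ) * monomial i a = monomial (i+2) a := by
      rw [X_pow_eq_monomial, monomial_mul_monomial, one_mul, add_comm]
    rw [this, Jint_monomial u hu, Jint_monomial (u+4) (by linarith)]
    congr 1
    push_cast
    ring

lemma Jint_exact (β : ℝ) (hβ : 0 < β) (W : Polynomial ℝ) :
    2 * Jint (2*β) (X * derivative W) + 2*β * Jint (2*β) W = W.eval 1 := by
  have hu : (0:ℝ) < 2*β := by linarith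
  induction W using Polynomial.induction_on' with
  | add p q hp hq =>
    rw [derivative_add, mul_add, Jint_add _ hu, Jint_add _ hu, eval_add]
    linarith [hp, hq]
  | monomial i a =>
    rw [derivative_monomial, eval_monomial, one_pow, mul_one]
    rcases Nat.eq_zero_or_pos i with hi | hi
    · subst hi
      simp only [Nat.cast_zero, mul_zero, map_zero, Nat.zero_sub, MulZeroClass.mul_zero]
      rw [Jint_zero, Jint_monomial _ hu]
      rw [mul_zero, zero_add, Nat.cast_zero, mul_zero, add_zero]
      field_simp
    · have hX : (X : Polynomial ℝ) * monomial (i-1) (a * i) = monomial i (a * i) := by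
        rw [X_mul_monomial, Nat.sub_add_cancel hi]
      rw [hX, Jint_monomial _ hu, Jint_monomial _ hu]
      have hpos : (0:ℝ) < 2*β + 2*i := by positivity
      field_simp
      ring

lemma prod_shift_eq_dP (E : ℝ) (m : ℕ) :
    ∏ i ∈ range (m+1), (E + i) = dP (E + m) (m+1) := by
  rw [dP_eq_prod]
  rw [← Finset.prod_range_reflect (fun j => E + (j:ℝ)) (m+1)]
  apply Finset.prod_congr rfl
  intro j hj
  have hj' : j ≤ m := by
    have := Finset.mem_range.mp hj; omega
  simp only [Nat.add_sub_cancel]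
  rw [Nat.cast_sub hj']
  ring

lemma sub_one_pow_expand (m : ℕ) :
    ((X : Polynomial ℝ) - 1)^m
      = ∑ s ∈ range (m+1), C ((-1:ℝ)^(m-s) * (m.choose s : ℝ)) * X^s := by
  have h := add_pow (X : Polynomial ℝ) (-1) m
  rw [show (X : Polynomial ℝ) - 1 = X + (-1) from by ring, h]
  apply Finset.sum_congr rfl
  intro s hs
  rw [map_mul]
  have h1 : ((-1 : Polynomial ℝ))^(m-s) = C ((-1:ℝ)^(m-s)) := by
    rw [map_pow, map_neg, map_one]
  have h2 : ((m.choose s : ℕ) : Polynomial ℝ) = C ((m.choose s : ℝ)) := by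
    simp
  rw [h1, h2]
  ring

lemma Jint_sub_one_pow (u : ℝ) (hu : 0 < u) (m e : ℕ) :
    Jint u ((X - 1)^m * X^e) = (1/2) * (-1:ℝ)^m * (Nat.factorial m : ℝ) / dP (u/2 + e + m) (m+1) := by
  have hE : (0:ℝ) < u/2 + e := by positivity
  have hexp : ((X : Polynomial ℝ) - 1)^m * X^e
      = ∑ s ∈ range (m+1), C ((-1:ℝ)^(m-s) * (m.choose s : ℝ)) * X^(s+e) := by
    rw [sub_one_pow_expand, Finset.sum_mul]
    apply Finset.sum_congr rfl
    intro s hs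
    rw [mul_assoc, ← pow_add]
  rw [hexp, Jint_sum u hu]
  have hterm : ∀ s ∈ range (m+1),
      Jint u (C ((-1:ℝ)^(m-s) * (m.choose s : ℝ)) * X^(s+e))
      = (1/2) * ((-1:ℝ)^(m-s) * (m.choose s : ℝ) / ((u/2+e) + s)) := by
    intro s hs
    rw [Jint_C_mul, Jint_X_pow u hu]
    have : u + 2*((s+e:ℕ):ℝ) = 2 * ((u/2+e) + s) := by push_cast; ring
    rw [this]
    have hpos : ((u/2+e) + (s:ℝ)) ≠ 0 := by positivity
    field_simp
  rw [Finset.sum_congr rfl hterm, ← Finset.mul_sum]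
  have hsum : ∑ s ∈ range (m+1), (-1:ℝ)^(m-s) * (m.choose s : ℝ) / ((u/2+e) + s)
      = (-1:ℝ)^m * (Nat.factorial m : ℝ) / ∏ i ∈ range (m+1), ((u/2+e)+i) := by
    exact partial_fraction_sum m (u/2+e) hE
  rw [hsum, prod_shift_eq_dP (u/2+e) m]
  rw [show u/2 + e + (m:ℝ) = u/2 + (e:ℝ) + m from by ring]
  ring

lemma Jint_SJ0_X_pow (b : ℝ) (hb : 0 < b) (p s : ℕ) :
    Jint (2*b+2) (SJ0 b p * X^s)
      = (1/2) * (∏ i ∈ range p, ((s:ℝ) - i)) / dP ((p:ℝ)+s+b+1) (p+1) := by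
  have hu : (0:ℝ) < 2*b+2 := by linarith
  have hexp : SJ0 b p * X^s
      = ∑ m ∈ range (p+1), C (genBinom (p : ℝ) (p-m) * genBinom ((p:ℝ) + b) m)
          * ((X - 1)^m * X^(p-m+s)) := by
    rw [SJ0, Finset.sum_mul]
    apply Finset.sum_congr rfl
    intro m hm
    rw [mul_assoc, mul_assoc, ← pow_add]
  rw [hexp, Jint_sum _ hu]
  have hterm : ∀ m ∈ range (p+1),
      Jint (2*b+2) (C (genBinom (p : ℝ) (p-m) * genBinom ((p:ℝ) + b) m) * ((X - 1)^m * X^(p-m+s)))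
      = (1/2) * ((-1:ℝ)^m * (p.choose m : ℝ) * dP ((p:ℝ)+b) m / dP ((p:ℝ)+s+b+1) (m+1)) := by
    intro m hm
    have hm' : m ≤ p := Nat.lt_succ_iff.mp (Finset.mem_range.mp hm)
    rw [Jint_C_mul, Jint_sub_one_pow _ hu]
    have harg : (2*b+2)/2 + ((p-m+s:ℕ):ℝ) + m = (p:ℝ)+s+b+1 := by
      rw [Nat.cast_add, Nat.cast_sub hm']
      ring
    rw [harg]
    have hGB : genBinom (p : ℝ) (p-m) = (p.choose m : ℝ) := by
      rw [genBinom_nat, Nat.choose_symm hm']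
    rw [hGB]
    have hfac : genBinom ((p:ℝ)+b) m * (Nat.factorial m : ℝ) = dP ((p:ℝ)+b) m :=
      genBinom_mul_factorial _ m
    rw [← hfac]
    ring
  rw [Finset.sum_congr rfl hterm, ← Finset.mul_sum]
  have hy : ∀ i : ℕ, i ≤ p + 1 → (p:ℝ)+s+b+1 - i ≠ 0 := by
    intro i hi
    have : (i:ℝ) ≤ (p:ℝ) + 1 := by exact_mod_cast hi
    have hs0 : (0:ℝ) ≤ s := Nat.cast_nonneg s
    nlinarith
  have := chu_vandermonde p ((p:ℝ)+b) ((p:ℝ)+s+b+1) hy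
  rw [this]
  have : ∏ i ∈ range p, ((p:ℝ)+s+b+1 - ((p:ℝ)+b) - 1 - i) = ∏ i ∈ range p, ((s:ℝ) - i) := by
    apply Finset.prod_congr rfl
    intro i _
    ring
  rw [this]
  ring

lemma Jint_SJ0_mul_le (b : ℝ) (hb : 0 < b) (p q : ℕ) (hqp : q ≤ p) :
    Jint (2*b+2) (SJ0 b p * SJ0 b q) = (if p = q then 1 else 0) / (2*(2*(p:ℝ)+b+1)) := by
  have hu : (0:ℝ) < 2*b+2 := by linarith
  have hq : SJ0 b q = ∑ i ∈ range (q+1), C ((SJ0 b q).coeff i) * X^i := by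
    conv_lhs => rw [as_sum_range' (SJ0 b q) (q+1) (Nat.lt_succ_of_le (SJ0_natDegree_le b q))]
    exact Finset.sum_congr rfl fun i _ => (C_mul_X_pow_eq_monomial).symm
  have hexp : SJ0 b p * SJ0 b q = ∑ i ∈ range (q+1), C ((SJ0 b q).coeff i) * (SJ0 b p * X^i) := by
    conv_lhs => rw [hq]
    rw [Finset.mul_sum]
    apply Finset.sum_congr rfl
    intro i _
    ring
  rw [hexp, Jint_sum _ hu]
  have hterm : ∀ i ∈ range (q+1),
      Jint (2*b+2) (C ((SJ0 b q).coeff i) * (SJ0 b p * X^i))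
      = (SJ0 b q).coeff i * ((1/2) * (∏ i' ∈ range p, ((i:ℝ) - i')) / dP ((p:ℝ)+i+b+1) (p+1)) := by
    intro i hi
    rw [Jint_C_mul, Jint_SJ0_X_pow b hb p i]
  rw [Finset.sum_congr rfl hterm]
  rcases Nat.lt_or_ge q p with hlt | hge
  · -- q < p : every term vanishes
    rw [if_neg (by omega)]
    rw [Finset.sum_eq_zero, zero_div]
    intro i hi
    have hip : i < p := by have := Finset.mem_range.mp hi; omega
    have : ∏ i' ∈ range p, ((i:ℝ) - i') = 0 :=
      Finset.prod_eq_zero (Finset.mem_range.mpr hip) (by norm_num)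
    rw [this]
    norm_num
  · -- q = p
    have hqq : q = p := le_antisymm hqp hge
    subst hqq
    rw [if_pos rfl]
    rw [Finset.sum_eq_single q]
    · rw [SJ0_coeff_top]
      have hprod : ∏ i' ∈ range q, ((q:ℝ) - i') = dP (q:ℝ) q := (dP_eq_prod _ _).symm
      have hdfac : dP (q:ℝ) q = (Nat.factorial q : ℝ) := by
        rw [dP]
        rw [show ((q:ℝ)) = ((q:ℕ):ℝ) from rfl]
        rw [descPochhammer_eval_eq_descFactorial ℝ q q, Nat.descFactorial_self]
      have hsplit : dP ((q:ℝ)+q+b+1) (q+1) = (2*(q:ℝ)+b+1) * dP (2*(q:ℝ)+b) q := by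
        have := dP_succ_left ((q:ℝ)+q+b+1) q
        rw [this]
        rw [show (q:ℝ)+q+b+1 - 1 = 2*(q:ℝ)+b from by ring, show (q:ℝ)+q+b+1 = 2*(q:ℝ)+b+1 from by ring]
      have hdpos : (0:ℝ) < dP (2*(q:ℝ)+b) q := by
        rw [dP_eq_prod]
        apply Finset.prod_pos
        intro i hi
        have hi' : (i:ℝ) < q := by exact_mod_cast Finset.mem_range.mp hi
        have : (0:ℝ) ≤ q := Nat.cast_nonneg q
        nlinarith
      have hGfac : genBinom (2*(q:ℝ)+b) q * (Nat.factorial q : ℝ) = dP (2*(q:ℝ)+b) q :=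
        genBinom_mul_factorial _ q
      rw [hprod, hdfac, hsplit]
      have hfq : (0:ℝ) < (Nat.factorial q : ℝ) := by exact_mod_cast Nat.factorial_pos q
      have hden : (0:ℝ) < 2*(q:ℝ)+b+1 := by positivity
      have hGpos : (0:ℝ) < genBinom (2*(q:ℝ)+b) q := by nlinarith
      rw [← hGfac]
      field_simp
    · intro i hi hne
      have hip : i < q := by have := Finset.mem_range.mp hi; omega
      have : ∏ i' ∈ range q, ((i:ℝ) - i') = 0 :=
        Finset.prod_eq_zero (Finset.mem_range.mpr hip) (by norm_num)
      rw [this]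
      norm_num
    · intro h
      exact absurd (Finset.self_mem_range_succ q) h

lemma Jint_SJ0_orthogonal (b : ℝ) (hb : 0 < b) (p q : ℕ) :
    Jint (2*b+2) (SJ0 b p * SJ0 b q) = (if p = q then 1 else 0) / (2*(2*(p:ℝ)+b+1)) := by
  rcases le_or_gt q p with h | h
  · exact Jint_SJ0_mul_le b hb p q h
  · rw [mul_comm (SJ0 b p) (SJ0 b q), Jint_SJ0_mul_le b hb q p h.le]
    rw [if_neg (by omega), if_neg (by omega)]
    simp

noncomputable def Pradial (β : ℝ) (i : ℕ) : Polynomial ℝ :=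
  C ((2*(i:ℝ)+β)/((i:ℝ)+β)) * SJm β i

noncomputable def Qradial (β : ℝ) (i : ℕ) : Polynomial ℝ :=
  C 2 * (X * derivative (Pradial β i)) + C β * Pradial β i

lemma Pradial_eval_one (β : ℝ) (hβ : 0 < β) (i : ℕ) :
    (Pradial β i).eval 1 = if i = 0 then 1 else 0 := by
  rw [Pradial, eval_mul, eval_C, SJm_eval_one]
  rcases Nat.eq_zero_or_pos i with hi | hi
  · subst hi
    simp [hβ.ne']
  · rw [if_neg (by omega : ¬ i = 0), mul_zero]

lemma Pradial_derivative (β : ℝ) (hβ : 0 < β) (i : ℕ) (hi : 1 ≤ i) :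
    derivative (Pradial β i) = C (2*(i:ℝ)+β) * SJ0 (β+1) (i-1) := by
  rw [Pradial, derivative_C_mul, SJm_derivative β i hi, ← mul_assoc, ← C_mul]
  congr 2
  have : (i:ℝ)+β ≠ 0 := by positivity
  field_simp

lemma Pradial_derivative_zero (β : ℝ) : derivative (Pradial β 0) = 0 := by
  rw [Pradial, derivative_C_mul, SJm]
  simp

lemma radial_core (β : ℝ) (hβ : 0 < β) (k j : ℕ) :
    Jint (2*β) (Qradial β k * Qradial β j) + β^2 * Jint (2*β) (Pradial β k * Pradial β j)
      = (if k = j then 1 else 0) * (2*(k:ℝ)+β) * (2 - if k = 0 then 1 else 0) := by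
  have hu : (0:ℝ) < 2*β := by linarith
  set Pk := Pradial β k
  set Pj := Pradial β j
  set Dk := derivative Pk with hDk
  set Dj := derivative Pj with hDj
  have hQQ : Qradial β k * Qradial β j
      = C 4 * (X^2 * (Dk * Dj)) + (C (2*β) * (X * derivative (Pk * Pj)) + C (β*β) * (Pk * Pj)) := by
    rw [derivative_mul]
    rw [Qradial, Qradial, ← hDk, ← hDj]
    rw [show (C (4:ℝ)) = C 2 * C 2 from by rw [← C_mul]; norm_num,
      show (C (2*β)) = C 2 * C β from by rw [← C_mul],
      show (C (β*β)) = C β * C β from by rw [← C_mul]]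
    ring
  rw [hQQ, Jint_add _ hu, Jint_add _ hu, Jint_C_mul, Jint_C_mul, Jint_C_mul]
  have hexact : 2 * Jint (2*β) (X * derivative (Pk * Pj)) + 2*β * Jint (2*β) (Pk * Pj)
      = (Pk * Pj).eval 1 := Jint_exact β hβ (Pk * Pj)
  have heval : (Pk * Pj).eval 1 = (if k = 0 then (1:ℝ) else 0) * (if j = 0 then 1 else 0) := by
    rw [eval_mul, Pradial_eval_one β hβ, Pradial_eval_one β hβ]
  -- main term
  have hmain : (4:ℝ) * Jint (2*β) (X^2 * (Dk * Dj))
      = if (1 ≤ k ∧ 1 ≤ j) then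
          (4 * (2*(k:ℝ)+β) * (2*(j:ℝ)+β)) * ((if k = j then 1 else 0) / (2*(2*(k:ℝ)+β)))
        else 0 := by
    rcases Nat.eq_zero_or_pos k with hk | hk
    · subst hk
      rw [hDk, Pradial_derivative_zero]
      rw [if_neg (by omega)]
      simp [Jint_zero]
    rcases Nat.eq_zero_or_pos j with hj | hj
    · subst hj
      rw [hDj, Pradial_derivative_zero]
      rw [if_neg (by omega)]
      simp [Jint_zero]
    rw [if_pos ⟨hk, hj⟩]
    rw [hDk, hDj, Pradial_derivative β hβ k hk, Pradial_derivative β hβ j hj]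
    have hrearr : (X^2 : Polynomial ℝ) * (C (2*(k:ℝ)+β) * SJ0 (β+1) (k-1) * (C (2*(j:ℝ)+β) * SJ0 (β+1) (j-1)))
        = C ((2*(k:ℝ)+β) * (2*(j:ℝ)+β)) * (X^2 * (SJ0 (β+1) (k-1) * SJ0 (β+1) (j-1))) := by
      rw [C_mul]; ring
    rw [hrearr, Jint_C_mul, Jint_shift _ hu]
    have h24 : 2*β+4 = 2*(β+1)+2 := by ring
    rw [h24, Jint_SJ0_orthogonal (β+1) (by linarith) (k-1) (j-1)]
    have hiff : (if k - 1 = j - 1 then (1:ℝ) else 0) = (if k = j then 1 else 0) := by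
      by_cases hkj : k = j
      · rw [if_pos hkj, if_pos (by omega)]
      · rw [if_neg hkj, if_neg (by omega)]
    rw [hiff]
    have hc : 2*((k-1:ℕ):ℝ)+(β+1)+1 = 2*(k:ℝ)+β := by
      rw [Nat.cast_sub hk, Nat.cast_one]
      ring
    rw [hc]
    ring
  -- assemble
  have hfinal : 4 * Jint (2*β) (X^2 * (Dk * Dj))
      + (2*β * Jint (2*β) (X * derivative (Pk * Pj)) + β*β * Jint (2*β) (Pk * Pj))
      + β^2 * Jint (2*β) (Pk * Pj)
      = (if k = j then 1 else 0) * (2*(k:ℝ)+β) * (2 - if k = 0 then 1 else 0) := by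
    have h1 : 2*β * Jint (2*β) (X * derivative (Pk * Pj)) + β*β * Jint (2*β) (Pk * Pj)
        + β^2 * Jint (2*β) (Pk * Pj) = β * (Pk * Pj).eval 1 := by
      nlinarith [hexact]
    rw [show 4 * Jint (2*β) (X^2 * (Dk * Dj))
      + (2*β * Jint (2*β) (X * derivative (Pk * Pj)) + β*β * Jint (2*β) (Pk * Pj))
      + β^2 * Jint (2*β) (Pk * Pj)
      = 4 * Jint (2*β) (X^2 * (Dk * Dj))
      + (2*β * Jint (2*β) (X * derivative (Pk * Pj)) + β*β * Jint (2*β) (Pk * Pj)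
        + β^2 * Jint (2*β) (Pk * Pj)) from by ring]
    rw [h1, hmain, heval]
    have h2kb : (0:ℝ) < 2*(k:ℝ)+β := by positivity
    by_cases hk : k = 0
    · by_cases hj : j = 0
      · subst hk; subst hj; norm_num
      · subst hk
        norm_num [hj, Ne.symm hj]
    · by_cases hj : j = 0
      · subst hj
        norm_num [hk]
      · by_cases hkj : k = j
        · subst hkj
          rw [if_pos (⟨by omega, by omega⟩ : 1 ≤ k ∧ 1 ≤ k), if_pos rfl, if_neg hk]
          field_simp
          ring
        · rw [if_pos (⟨by omega, by omega⟩ : 1 ≤ k ∧ 1 ≤ j), if_neg hkj, if_neg hk, if_neg hj]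
          norm_num
  linarith [hfinal]


lemma integral_cos_mul_left (a L : ℝ) (ha : a ≠ 0) :
    ∫ θ in (0:ℝ)..L, Real.cos (a*θ) = Real.sin (a*L)/a := by
  have h := intervalIntegral.integral_comp_mul_left (a := 0) (b := L) (fun x => Real.cos x) ha
  simp only [mul_zero] at h
  rw [h, integral_cos]
  simp [div_eq_inv_mul]

lemma integral_cos_nat_pi (γ : ℝ) (hγ : 0 < γ) (z : ℤ) (hz : z ≠ 0) :
    ∫ θ in (0:ℝ)..(π/γ), Real.cos ((z:ℝ)*γ*θ) = 0 := by
  have ha : (z:ℝ)*γ ≠ 0 := by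
    apply mul_ne_zero _ hγ.ne'
    exact_mod_cast hz
  have h := integral_cos_mul_left ((z:ℝ)*γ) (π/γ) ha
  have harg : (z:ℝ)*γ*(π/γ) = (z:ℝ)*π := by field_simp
  rw [harg] at h
  rw [h, Real.sin_int_mul_pi, zero_div]

lemma sector_orth_trig (γ : ℝ) (hγ : 0 < γ) (n m : ℕ) (hn : 1 ≤ n) (hm : 1 ≤ m) :
    (∫ θ in (0:ℝ)..(π/γ), Real.sin ((n:ℝ)*γ*θ) * Real.sin ((m:ℝ)*γ*θ)
      = if m = n then π/(2*γ) else 0)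
    ∧ (∫ θ in (0:ℝ)..(π/γ), Real.cos ((n:ℝ)*γ*θ) * Real.cos ((m:ℝ)*γ*θ)
      = if m = n then π/(2*γ) else 0) := by
  set a1 : ℝ := ((n:ℝ)-m)*γ with ha1
  set a2 : ℝ := ((n:ℝ)+m)*γ with ha2
  have ha2ne : a2 ≠ 0 := by
    rw [ha2]
    apply mul_ne_zero _ hγ.ne'
    have : (1:ℝ) ≤ (n:ℝ) := by exact_mod_cast hn
    have : (1:ℝ) ≤ (m:ℝ) := by exact_mod_cast hm
    positivity
  have hI2 : ∫ θ in (0:ℝ)..(π/γ), Real.cos (a2*θ) = 0 := by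
    have : a2 = (((n+m:ℕ):ℤ):ℝ)*γ := by rw [ha2]; push_cast; ring
    rw [this]
    apply integral_cos_nat_pi γ hγ
    have : (0:ℤ) < ((n+m:ℕ):ℤ) := by exact_mod_cast (by omega : 0 < n + m)
    omega
  have hI1 : ∫ θ in (0:ℝ)..(π/γ), Real.cos (a1*θ) = if m = n then π/γ else 0 := by
    by_cases hmn : m = n
    · subst hmn
      have : a1 = 0 := by rw [ha1]; ring
      rw [this]
      simp
    · rw [if_neg hmn]
      have : a1 = ((((n:ℤ)-m):ℤ):ℝ)*γ := by rw [ha1]; push_cast; ring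
      rw [this]
      apply integral_cos_nat_pi γ hγ
      have : (n:ℤ) ≠ (m:ℤ) := by exact_mod_cast Ne.symm hmn
      omega
  have hcont1 : IntervalIntegrable (fun θ => Real.cos (a1*θ)) volume 0 (π/γ) :=
    (Real.continuous_cos.comp (continuous_const.mul continuous_id)).intervalIntegrable 0 (π/γ)
  have hcont2 : IntervalIntegrable (fun θ => Real.cos (a2*θ)) volume 0 (π/γ) :=
    (Real.continuous_cos.comp (continuous_const.mul continuous_id)).intervalIntegrable 0 (π/γ)
  constructor
  · have hpt : ∀ θ : ℝ, Real.sin ((n:ℝ)*γ*θ) * Real.sin ((m:ℝ)*γ*θ)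
        = (Real.cos (a1*θ) - Real.cos (a2*θ))/2 := by
      intro θ
      rw [show a1*θ = (n:ℝ)*γ*θ - (m:ℝ)*γ*θ from by rw [ha1]; ring,
        show a2*θ = (n:ℝ)*γ*θ + (m:ℝ)*γ*θ from by rw [ha2]; ring,
        Real.cos_sub, Real.cos_add]
      ring
    rw [intervalIntegral.integral_congr (fun θ _ => hpt θ)]
    rw [intervalIntegral.integral_div, intervalIntegral.integral_sub hcont1 hcont2, hI1, hI2]
    by_cases hmn : m = n
    · rw [if_pos hmn, if_pos hmn]
      rw [sub_zero, div_div, mul_comm γ 2]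
    · rw [if_neg hmn, if_neg hmn]
      norm_num
  · have hpt : ∀ θ : ℝ, Real.cos ((n:ℝ)*γ*θ) * Real.cos ((m:ℝ)*γ*θ)
        = (Real.cos (a1*θ) + Real.cos (a2*θ))/2 := by
      intro θ
      rw [show a1*θ = (n:ℝ)*γ*θ - (m:ℝ)*γ*θ from by rw [ha1]; ring,
        show a2*θ = (n:ℝ)*γ*θ + (m:ℝ)*γ*θ from by rw [ha2]; ring,
        Real.cos_sub, Real.cos_add]
      ring
    rw [intervalIntegral.integral_congr (fun θ _ => hpt θ)]
    rw [intervalIntegral.integral_div, intervalIntegral.integral_add hcont1 hcont2, hI1, hI2]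
    by_cases hmn : m = n
    · rw [if_pos hmn, if_pos hmn]
      rw [add_zero, div_div, mul_comm γ 2]
    · rw [if_neg hmn, if_neg hmn]
      norm_num

lemma genJacobi_eval (β : ℝ) (k : ℕ) (t : ℝ) :
    genJacobi (-1) β k (2*t - 1) = (SJm β k).eval t := by
  rw [genJacobi, SJm, eval_finset_sum]
  apply Finset.sum_congr rfl
  intro m hm
  rw [eval_mul, eval_mul, eval_pow, eval_pow, eval_sub, eval_X, eval_one, eval_C]
  rw [show ((k:ℝ) + (-1)) = (k:ℝ) - 1 from by ring,
    show (2*t - 1 - 1)/2 = t - 1 from by ring,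
    show (2*t - 1 + 1)/2 = t from by ring]
  ring

lemma Psi_eq (γ c : ℝ) (k n : ℕ) (r θ : ℝ) :
    Psi γ c k n r θ
      = (Pradial (betaN γ c n) k).eval (r^2) * r ^ (betaN γ c n) * Real.sin ((n:ℝ)*γ*θ) := by
  rw [Psi, Pradial, eval_mul, eval_C]
  rw [show (2*r^2 - 1 : ℝ) = 2*(r^2) - 1 from by ring, genJacobi_eval]

lemma hasDerivAt_radial (β A : ℝ) (W : Polynomial ℝ) (r : ℝ) (hr : 0 < r) :
    HasDerivAt (fun s : ℝ => W.eval (s^2) * s ^ β * A)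
      (r ^ (β-1) * ((C 2 * (X * derivative W) + C β * W).eval (r^2)) * A) r := by
  have h0 : HasDerivAt (fun s : ℝ => s^2) (2*r) r := by
    simpa using hasDerivAt_pow 2 r
  have h1 : HasDerivAt (fun s : ℝ => W.eval (s^2)) ((derivative W).eval (r^2) * (2*r)) r :=
    by have := (W.hasDerivAt (r^2)).comp r h0; exact this
  have h2 : HasDerivAt (fun s : ℝ => s ^ β) (β * r ^ (β-1)) r :=
    Real.hasDerivAt_rpow_const (Or.inl hr.ne')
  have h3 := (h1.mul h2).mul_const A
  refine h3.congr_deriv ?_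
  rw [eval_add, eval_mul, eval_mul, eval_mul, eval_C, eval_C, eval_X]
  have hrb : r ^ (β-1) * r = r ^ β := by
    rw [Real.rpow_sub_one hr.ne']
    field_simp
  have expand : r ^ (β-1) * (2 * (r^2 * (derivative W).eval (r^2)) + β * W.eval (r^2)) * A
      = ((derivative W).eval (r^2) * (2*r) * (r ^ (β-1) * r) + W.eval (r^2) * (β * r ^ (β-1))) * A := by
    ring
  rw [expand, hrb]

lemma deriv_Psi_r (γ c : ℝ) (k n : ℕ) (θ r : ℝ) (hr : 0 < r) :
    deriv (fun r' => Psi γ c k n r' θ) r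
      = r ^ (betaN γ c n - 1) * (Qradial (betaN γ c n) k).eval (r^2) * Real.sin ((n:ℝ)*γ*θ) := by
  have hfun : (fun r' => Psi γ c k n r' θ)
      = fun r' => (Pradial (betaN γ c n) k).eval (r'^2) * r' ^ (betaN γ c n) * Real.sin ((n:ℝ)*γ*θ) :=
    funext (fun r' => Psi_eq γ c k n r' θ)
  rw [hfun, Qradial]
  exact (hasDerivAt_radial _ _ _ r hr).deriv

lemma deriv_Psi_theta (γ c : ℝ) (k n : ℕ) (r θ : ℝ) :
    deriv (fun θ' => Psi γ c k n r θ') θ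
      = (Pradial (betaN γ c n) k).eval (r^2) * r ^ (betaN γ c n)
        * ((n:ℝ)*γ*Real.cos ((n:ℝ)*γ*θ)) := by
  have hfun : (fun θ' => Psi γ c k n r θ')
      = fun θ' => (Pradial (betaN γ c n) k).eval (r^2) * r ^ (betaN γ c n) * Real.sin ((n:ℝ)*γ*θ') :=
    funext (fun θ' => Psi_eq γ c k n r θ')
  rw [hfun]
  have hs : HasDerivAt (fun θ' : ℝ => Real.sin ((n:ℝ)*γ*θ')) ((n:ℝ)*γ*Real.cos ((n:ℝ)*γ*θ)) θ := by
    have h0 : HasDerivAt (fun θ' : ℝ => (n:ℝ)*γ*θ') ((n:ℝ)*γ) θ := by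
      simpa using (hasDerivAt_id θ).const_mul ((n:ℝ)*γ)
    have h2 := (Real.hasDerivAt_sin ((n:ℝ)*γ*θ)).comp θ h0
    rw [show Real.cos ((n:ℝ)*γ*θ) * ((n:ℝ)*γ) = (n:ℝ)*γ*Real.cos ((n:ℝ)*γ*θ) from mul_comm _ _] at h2
    exact h2
  exact ((hs.const_mul _).deriv)

lemma betaN_pos (γ c : ℝ) (hγ : 0 < γ) (n : ℕ) (hn : 1 ≤ n) : 0 < betaN γ c n := by
  rw [betaN]
  apply Real.sqrt_pos.mpr
  have h1 : (1:ℝ) ≤ (n:ℝ) := by exact_mod_cast hn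
  have h2 : (0:ℝ) < γ^2 := by positivity
  have h3 : (1:ℝ) ≤ (n:ℝ)^2 := by nlinarith
  nlinarith [sq_nonneg c, h2, h3, mul_le_mul_of_nonneg_left h3 h2.le]

lemma betaN_sq (γ c : ℝ) (n : ℕ) : (betaN γ c n)^2 = c^2 + γ^2*(n:ℝ)^2 := by
  rw [betaN]
  apply Real.sq_sqrt
  positivity

lemma inner_integral (γ c : ℝ) (hγ : 0 < γ) (k j n m : ℕ) (hn : 1 ≤ n) (hm : 1 ≤ m) (θ : ℝ) :
    (∫ r in (0:ℝ)..1,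
        (deriv (fun r' => Psi γ c k n r' θ) r * deriv (fun r' => Psi γ c j m r' θ) r
          + r ^ (-2 : ℝ) * deriv (fun θ' => Psi γ c k n r θ') θ *
              deriv (fun θ' => Psi γ c j m r θ') θ
          + c ^ 2 * r ^ (-2 : ℝ) * Psi γ c k n r θ * Psi γ c j m r θ) * r)
      = (Jint (betaN γ c n + betaN γ c m) (Qradial (betaN γ c n) k * Qradial (betaN γ c m) j)
          + c^2 * Jint (betaN γ c n + betaN γ c m) (Pradial (betaN γ c n) k * Pradial (betaN γ c m) j))
          * (Real.sin ((n:ℝ)*γ*θ) * Real.sin ((m:ℝ)*γ*θ))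
        + (((n:ℝ)*γ) * ((m:ℝ)*γ)
            * Jint (betaN γ c n + betaN γ c m) (Pradial (betaN γ c n) k * Pradial (betaN γ c m) j))
          * (Real.cos ((n:ℝ)*γ*θ) * Real.cos ((m:ℝ)*γ*θ)) := by
  have hβn := betaN_pos γ c hγ n hn
  have hβm := betaN_pos γ c hγ m hm
  set βn := betaN γ c n
  set βm := betaN γ c m
  have hu : (0:ℝ) < βn + βm := by linarith
  set S1 := Real.sin ((n:ℝ)*γ*θ)
  set S2 := Real.sin ((m:ℝ)*γ*θ)
  set C1 := Real.cos ((n:ℝ)*γ*θ)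
  set C2 := Real.cos ((m:ℝ)*γ*θ)
  set QQ := Qradial βn k * Qradial βm j with hQQ
  set PP := Pradial βn k * Pradial βm j with hPP
  have hcong : ∀ r ∈ Set.Ioc (0:ℝ) 1,
      (deriv (fun r' => Psi γ c k n r' θ) r * deriv (fun r' => Psi γ c j m r' θ) r
          + r ^ (-2 : ℝ) * deriv (fun θ' => Psi γ c k n r θ') θ *
              deriv (fun θ' => Psi γ c j m r θ') θ
          + c ^ 2 * r ^ (-2 : ℝ) * Psi γ c k n r θ * Psi γ c j m r θ) * r
      = (S1*S2) * (r ^ (βn+βm-1) * QQ.eval (r^2))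
        + (c^2*(S1*S2) + ((n:ℝ)*γ)*((m:ℝ)*γ)*(C1*C2)) * (r ^ (βn+βm-1) * PP.eval (r^2)) := by
    intro r hr
    have hr0 : 0 < r := hr.1
    rw [deriv_Psi_r γ c k n θ r hr0, deriv_Psi_r γ c j m θ r hr0,
      deriv_Psi_theta γ c k n r θ, deriv_Psi_theta γ c j m r θ,
      Psi_eq γ c k n r θ, Psi_eq γ c j m r θ]
    rw [hQQ, hPP, eval_mul, eval_mul]
    have e1 : (r ^ (βn-1)) * (r ^ (βm-1)) * r = r ^ (βn+βm-1) := by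
      calc (r ^ (βn-1)) * (r ^ (βm-1)) * r = r^((βn-1)+(βm-1)) * r^(1:ℝ) := by
            rw [Real.rpow_add hr0, Real.rpow_one]
        _ = r^((βn-1)+(βm-1)+1) := by rw [← Real.rpow_add hr0]
        _ = r ^ (βn+βm-1) := by ring_nf
    have e2 : r^(-2:ℝ) * (r^βn * r^βm) * r = r ^ (βn+βm-1) := by
      calc r^(-2:ℝ) * (r^βn * r^βm) * r = r^((-2)+(βn+βm)) * r^(1:ℝ) := by
            rw [Real.rpow_add hr0, Real.rpow_add hr0, Real.rpow_one]
            try ring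
        _ = r^((-2)+(βn+βm)+1) := by rw [← Real.rpow_add hr0]
        _ = r ^ (βn+βm-1) := by ring_nf
    linear_combination ((Qradial βn k).eval (r^2) * (Qradial βm j).eval (r^2) * S1 * S2) * e1
      + ((Pradial βn k).eval (r^2) * (Pradial βm j).eval (r^2)
          * (((n:ℝ)*γ)*((m:ℝ)*γ)*C1*C2 + c^2*(S1*S2))) * e2
  have hae : ∫ r in (0:ℝ)..1,
      (deriv (fun r' => Psi γ c k n r' θ) r * deriv (fun r' => Psi γ c j m r' θ) r
          + r ^ (-2 : ℝ) * deriv (fun θ' => Psi γ c k n r θ') θ *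
              deriv (fun θ' => Psi γ c j m r θ') θ
          + c ^ 2 * r ^ (-2 : ℝ) * Psi γ c k n r θ * Psi γ c j m r θ) * r
      = ∫ r in (0:ℝ)..1,
        ((S1*S2) * (r ^ (βn+βm-1) * QQ.eval (r^2))
          + (c^2*(S1*S2) + ((n:ℝ)*γ)*((m:ℝ)*γ)*(C1*C2)) * (r ^ (βn+βm-1) * PP.eval (r^2))) := by
    apply intervalIntegral.integral_congr_ae
    filter_upwards [] with r
    intro hr
    rw [Set.uIoc_of_le (by norm_num : (0:ℝ) ≤ 1)] at hr
    exact hcong r hr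
  rw [hae]
  have hint1 : IntervalIntegrable (fun r => r ^ (βn+βm-1) * QQ.eval (r^2)) volume 0 1 :=
    Jint_integrable _ hu QQ
  have hint2 : IntervalIntegrable (fun r => r ^ (βn+βm-1) * PP.eval (r^2)) volume 0 1 :=
    Jint_integrable _ hu PP
  rw [intervalIntegral.integral_add (hint1.const_mul _) (hint2.const_mul _),
    intervalIntegral.integral_const_mul, intervalIntegral.integral_const_mul]
  have hJ1 : ∫ r in (0:ℝ)..1, r ^ (βn+βm-1) * QQ.eval (r^2) = Jint (βn+βm) QQ := rfl
  have hJ2 : ∫ r in (0:ℝ)..1, r ^ (βn+βm-1) * PP.eval (r^2) = Jint (βn+βm) PP := rfl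
  rw [hJ1, hJ2]
  ring




end Auxiliary

/-- Sobolev orthogonality of the basis functions `Ψ_k^n` on the circular sector:
`a(Ψ_k^n, Ψ_j^m) = (π/(2γ)) δ_{m,n} δ_{k,j} (2k+β_n)(2-δ_{k,0})`. -/
theorem sector_Psi_sobolev_orthogonality (γ c : ℝ) (hγ : 1 / 2 ≤ γ)
    (k j n m : ℕ) (hn : 1 ≤ n) (hm : 1 ≤ m) :
    (∫ θ in (0:ℝ)..(π / γ), ∫ r in (0:ℝ)..1,
        (deriv (fun r' => Psi γ c k n r' θ) r * deriv (fun r' => Psi γ c j m r' θ) r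
          + r ^ (-2 : ℝ) * deriv (fun θ' => Psi γ c k n r θ') θ *
              deriv (fun θ' => Psi γ c j m r θ') θ
          + c ^ 2 * r ^ (-2 : ℝ) * Psi γ c k n r θ * Psi γ c j m r θ) * r)
      = π / (2 * γ) * (if m = n then 1 else 0) * (if k = j then 1 else 0) *
          (2 * (k : ℝ) + betaN γ c n) * (2 - if k = 0 then 1 else 0) := by
  have hγ0 : 0 < γ := by linarith
  rw [intervalIntegral.integral_congr (fun θ _ => inner_integral γ c hγ0 k j n m hn hm θ)]
  set βn := betaN γ c n with hβn
  set βm := betaN γ c m with hβm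
  set A : ℝ := Jint (βn + βm) (Qradial βn k * Qradial βm j)
      + c^2 * Jint (βn + βm) (Pradial βn k * Pradial βm j) with hA
  set B : ℝ := ((n:ℝ)*γ) * ((m:ℝ)*γ) * Jint (βn + βm) (Pradial βn k * Pradial βm j) with hB
  have hcs : Continuous (fun θ : ℝ => A * (Real.sin ((n:ℝ)*γ*θ) * Real.sin ((m:ℝ)*γ*θ))) := by
    fun_prop
  have hcc : Continuous (fun θ : ℝ => B * (Real.cos ((n:ℝ)*γ*θ) * Real.cos ((m:ℝ)*γ*θ))) := by
    fun_prop
  rw [intervalIntegral.integral_add (hcs.intervalIntegrable _ _) (hcc.intervalIntegrable _ _),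
    intervalIntegral.integral_const_mul, intervalIntegral.integral_const_mul,
    (sector_orth_trig γ hγ0 n m hn hm).1, (sector_orth_trig γ hγ0 n m hn hm).2]
  by_cases hmn : m = n
  · subst hmn
    rw [if_pos rfl, if_pos rfl]
    have hbe : βm = βn := by rw [hβn, hβm]
    rw [hA, hB, hbe, show βn + βn = 2*βn from by ring]
    have hrc := radial_core βn (by rw [hβn]; exact betaN_pos γ c hγ0 m hm) k j
    have hsq : βn^2 = c^2 + γ^2*(m:ℝ)^2 := by rw [hβn]; exact betaN_sq γ c m
    linear_combination (π/(2*γ)) * hrc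
      - (π/(2*γ)) * Jint (2*βn) (Pradial βn k * Pradial βn j) * hsq
  · rw [if_neg hmn, if_neg hmn]
    ring
end

section
/- Let d be a natural number with d ≥ 3, β ∈ ℝ, and let u, v be continuously differentiable real-valued functions on [0,1]. Then ∫_0^1 (d/dr)(r^{d/2−1−β} u(r)) · (d/dr)(r^{d/2−1−β} v(r)) · r^{2β+1} dr = ∫_0^1 [ r² u'(r) v'(r) + (β² − (d/2−1)²) u(r) v(r) ] r^{d−3} dr + (d/2−1−β) u(1) v(1). -/
open Real MeasureTheory

/-- Integration-by-parts identity: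
`∫₀¹ (r^{d/2-1-β}u)' (r^{d/2-1-β}v)' r^{2β+1} dr
  = ∫₀¹ [r² u' v' + (β² - (d/2-1)²) u v] r^{d-3} dr + (d/2-1-β) u(1) v(1)`
for `d ≥ 3` and `u, v` continuously differentiable on `[0,1]`. -/
theorem radial_integration_by_parts (d : ℕ) (hd : 3 ≤ d) (β : ℝ) (u v : ℝ → ℝ)
    (hu : ContDiffOn ℝ 1 u (Set.Icc 0 1)) (hv : ContDiffOn ℝ 1 v (Set.Icc 0 1)) :
    (∫ r in (0:ℝ)..1,
        deriv (fun s => s ^ ((d : ℝ) / 2 - 1 - β) * u s) r *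
          deriv (fun s => s ^ ((d : ℝ) / 2 - 1 - β) * v s) r * r ^ (2 * β + 1))
      = (∫ r in (0:ℝ)..1,
          (r ^ 2 * deriv u r * deriv v r + (β ^ 2 - ((d : ℝ) / 2 - 1) ^ 2) * u r * v r) *
            r ^ ((d : ℝ) - 3))
        + ((d : ℝ) / 2 - 1 - β) * u 1 * v 1 := by
  have hd3 : ((d - 3 : ℕ) : ℝ) = (d : ℝ) - 3 := by
    rw [Nat.cast_sub hd]; norm_num
  have hd2 : ((d - 2 : ℕ) : ℝ) = (d : ℝ) - 2 := by
    rw [Nat.cast_sub (by omega)]; norm_num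
  have hUD : UniqueDiffOn ℝ (Set.Icc (0:ℝ) 1) := uniqueDiffOn_Icc one_pos
  set U := derivWithin u (Set.Icc (0:ℝ) 1) with hUdef
  set V := derivWithin v (Set.Icc (0:ℝ) 1) with hVdef
  have hUc : ContinuousOn U (Set.Icc 0 1) := hu.continuousOn_derivWithin hUD le_rfl
  have hVc : ContinuousOn V (Set.Icc 0 1) := hv.continuousOn_derivWithin hUD le_rfl
  have huc : ContinuousOn u (Set.Icc 0 1) := hu.continuousOn
  have hvc : ContinuousOn v (Set.Icc 0 1) := hv.continuousOn
  have hderiv : ∀ w : ℝ → ℝ, ContDiffOn ℝ 1 w (Set.Icc 0 1) → ∀ r ∈ Set.Ioo (0:ℝ) 1,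
      HasDerivAt w (derivWithin w (Set.Icc (0:ℝ) 1) r) r := by
    intro w hw r hr
    have hmem : Set.Icc (0:ℝ) 1 ∈ nhds r := Icc_mem_nhds hr.1 hr.2
    have hdw : DifferentiableAt ℝ w r :=
      ((hw.differentiableOn one_ne_zero) r (Set.Ioo_subset_Icc_self hr)).differentiableAt hmem
    rw [derivWithin_of_mem_nhds hmem]
    exact hdw.hasDerivAt
  -- auxiliary functions
  set H : ℝ → ℝ := fun r =>
    (r ^ 2 * U r * V r + (β ^ 2 - ((d : ℝ) / 2 - 1) ^ 2) * u r * v r) * r ^ (d - 3) with hHdef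
  set G : ℝ → ℝ := fun r =>
    ((d : ℝ) / 2 - 1 - β) *
      (((d : ℝ) - 2) * r ^ (d - 3) * (u r * v r) + r ^ (d - 2) * (U r * v r + u r * V r))
    with hGdef
  -- continuity / integrability
  have hHc : ContinuousOn H (Set.Icc 0 1) := by
    apply ContinuousOn.mul _ (continuousOn_pow _)
    exact ((((continuousOn_pow 2).mul hUc).mul hVc).add
      (((continuousOn_const.mul huc)).mul hvc))
  have hGc : ContinuousOn G (Set.Icc 0 1) := by
    apply ContinuousOn.mul continuousOn_const
    exact (((continuousOn_const.mul (continuousOn_pow _)).mul (huc.mul hvc)).add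
      ((continuousOn_pow _).mul ((hUc.mul hvc).add (huc.mul hVc))))
  have hHint : IntervalIntegrable H volume 0 1 := by
    apply ContinuousOn.intervalIntegrable
    rwa [Set.uIcc_of_le (by norm_num : (0:ℝ) ≤ 1)]
  have hGint : IntervalIntegrable G volume 0 1 := by
    apply ContinuousOn.intervalIntegrable
    rwa [Set.uIcc_of_le (by norm_num : (0:ℝ) ≤ 1)]
  -- FTC for G
  have hFTC : (∫ r in (0:ℝ)..1, G r) = ((d : ℝ) / 2 - 1 - β) * u 1 * v 1 := by
    have hFc : ContinuousOn
        (fun r : ℝ => ((d : ℝ) / 2 - 1 - β) * (r ^ (d - 2) * (u r * v r)))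
        (Set.Icc 0 1) :=
      continuousOn_const.mul ((continuousOn_pow _).mul (huc.mul hvc))
    have hF' : ∀ r ∈ Set.Ioo (0:ℝ) 1,
        HasDerivAt (fun s : ℝ => ((d : ℝ) / 2 - 1 - β) * (s ^ (d - 2) * (u s * v s))) (G r) r := by
      intro r hr
      have hu1 := hderiv u hu r hr
      have hv1 := hderiv v hv r hr
      have hp : HasDerivAt (fun s : ℝ => s ^ (d - 2))
          (((d : ℝ) - 2) * r ^ (d - 3)) r := by
        have h := hasDerivAt_pow (d - 2) r
        have h1 : d - 2 - 1 = d - 3 := by omega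
        rw [h1, hd2] at h
        exact h
      have := (hp.mul (hu1.mul hv1)).const_mul ((d : ℝ) / 2 - 1 - β)
      exact this
    have := intervalIntegral.integral_eq_sub_of_hasDerivAt_of_le (by norm_num : (0:ℝ) ≤ 1)
      hFc hF' hGint
    rw [this]
    have h02 : (0:ℝ) ^ (d - 2) = 0 := zero_pow (by omega)
    simp [h02]
    ring
  -- pointwise identity on Ioo
  have hcong : ∀ r ∈ Set.Ioo (0:ℝ) 1,
      deriv (fun s => s ^ ((d : ℝ) / 2 - 1 - β) * u s) r *
        deriv (fun s => s ^ ((d : ℝ) / 2 - 1 - β) * v s) r * r ^ (2 * β + 1)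
      = H r + G r := by
    intro r hr
    have hr0 : (0:ℝ) < r := hr.1
    have hu1 := hderiv u hu r hr
    have hv1 := hderiv v hv r hr
    have hru : HasDerivAt (fun s => s ^ ((d : ℝ) / 2 - 1 - β) * u s)
        (((d : ℝ) / 2 - 1 - β) * r ^ ((d : ℝ) / 2 - 1 - β - 1) * u r +
          r ^ ((d : ℝ) / 2 - 1 - β) * U r) r :=
      (Real.hasDerivAt_rpow_const (Or.inl hr0.ne')).mul hu1
    have hrv : HasDerivAt (fun s => s ^ ((d : ℝ) / 2 - 1 - β) * v s)
        (((d : ℝ) / 2 - 1 - β) * r ^ ((d : ℝ) / 2 - 1 - β - 1) * v r +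
          r ^ ((d : ℝ) / 2 - 1 - β) * V r) r :=
      (Real.hasDerivAt_rpow_const (Or.inl hr0.ne')).mul hv1
    rw [hru.deriv, hrv.deriv, hHdef, hGdef]
    have e1 : r ^ ((d : ℝ) / 2 - 1 - β - 1) * r ^ ((d : ℝ) / 2 - 1 - β - 1) * r ^ (2 * β + 1)
        = r ^ (d - 3) := by
      rw [← Real.rpow_natCast r (d - 3), hd3, ← Real.rpow_add hr0, ← Real.rpow_add hr0]
      congr 1; ring
    have e2 : r ^ ((d : ℝ) / 2 - 1 - β - 1) * r ^ ((d : ℝ) / 2 - 1 - β) * r ^ (2 * β + 1)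
        = r ^ (d - 2) := by
      rw [← Real.rpow_natCast r (d - 2), hd2, ← Real.rpow_add hr0, ← Real.rpow_add hr0]
      congr 1; ring
    have e3 : r ^ ((d : ℝ) / 2 - 1 - β) * r ^ ((d : ℝ) / 2 - 1 - β) * r ^ (2 * β + 1)
        = r ^ 2 * r ^ (d - 3) := by
      have h23 : r ^ 2 * r ^ (d - 3) = r ^ (d - 1) := by
        rw [← pow_add]; congr 1; omega
      rw [h23, ← Real.rpow_natCast r (d - 1), (by rw [Nat.cast_sub (by omega)]; norm_num :
        ((d - 1 : ℕ) : ℝ) = (d : ℝ) - 1), ← Real.rpow_add hr0, ← Real.rpow_add hr0]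
      congr 1; ring
    set X := r ^ (d - 3) with hX
    set Y := r ^ (d - 2) with hY
    linear_combination (((d : ℝ) / 2 - 1 - β) ^ 2 * (u r * v r)) * e1 +
      (((d : ℝ) / 2 - 1 - β) * (u r * V r + U r * v r)) * e2 + (U r * V r) * e3
  -- put things together
  have hae : ∀ᵐ r ∂(volume : Measure ℝ), r ∈ Set.uIoc (0:ℝ) 1 → r ∈ Set.Ioo (0:ℝ) 1 := by
    have h1 : (volume : Measure ℝ) {(1:ℝ)} = 0 := measure_singleton 1
    filter_upwards [compl_mem_ae_iff.mpr h1] with r hr1 hr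
    rw [Set.uIoc_of_le (by norm_num : (0:ℝ) ≤ 1)] at hr
    exact ⟨hr.1, lt_of_le_of_ne hr.2 hr1⟩
  have step1 : (∫ r in (0:ℝ)..1,
        deriv (fun s => s ^ ((d : ℝ) / 2 - 1 - β) * u s) r *
          deriv (fun s => s ^ ((d : ℝ) / 2 - 1 - β) * v s) r * r ^ (2 * β + 1))
      = ∫ r in (0:ℝ)..1, (H r + G r) := by
    apply intervalIntegral.integral_congr_ae
    filter_upwards [hae] with r hr hmem
    exact hcong r (hr hmem)
  have step2 : (∫ r in (0:ℝ)..1,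
        (r ^ 2 * deriv u r * deriv v r + (β ^ 2 - ((d : ℝ) / 2 - 1) ^ 2) * u r * v r) *
          r ^ ((d : ℝ) - 3)) = ∫ r in (0:ℝ)..1, H r := by
    apply intervalIntegral.integral_congr_ae
    filter_upwards [hae] with r hr hmem
    have hrI := hr hmem
    rw [(hderiv u hu r hrI).deriv, (hderiv v hv r hrI).deriv, hHdef]
    congr 1
    rw [← Real.rpow_natCast r (d - 3), hd3]
  rw [step1, intervalIntegral.integral_add hHint hGint, step2, hFTC]
end

section
/- Let d ∈ ℕ with d ≥ 2, n ∈ ℕ₀, c ∈ ℝ, and set β = √(c² + (n + d/2 − 1)²). If u is a twice differentiable real-valued function on (0,∞), define w on (0,∞) by w(ρ) = ρ^{(d/2−1−β)/2} u(√ρ). Then for every r > 0: −r^{1−d} (d/dr)(r^{d−1} u'(r)) + (c² + n(n+d−2)) r^{−2} u(r) = −4 r^{1−d/2−β} · ( (d/dρ)[ ρ^{β+1} w'(ρ) ] ) evaluated at ρ = r². -/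
open Real MeasureTheory

lemma aux_rpow_sqrt (f : ℝ → ℝ) (hf : ∀ x ∈ Set.Ioi (0:ℝ), DifferentiableAt ℝ f x)
    (e ρ : ℝ) (hρ : 0 < ρ) :
    HasDerivAt (fun t => t ^ e * f (Real.sqrt t))
      (e * ρ ^ (e - 1) * f (Real.sqrt ρ) + ρ ^ (e - 1/2) / 2 * deriv f (Real.sqrt ρ)) ρ := by
  have hs : HasDerivAt (fun t => f (Real.sqrt t))
      (deriv f (Real.sqrt ρ) * (1 / (2 * Real.sqrt ρ))) ρ :=
    ((hf _ (Set.mem_Ioi.2 (Real.sqrt_pos.2 hρ))).hasDerivAt).comp ρ (Real.hasDerivAt_sqrt hρ.ne')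
  have h := (Real.hasDerivAt_rpow_const (p := e) (Or.inl hρ.ne')).mul hs
  refine h.congr_deriv ?_
  have h1 : Real.sqrt ρ = ρ ^ (1/2:ℝ) := Real.sqrt_eq_rpow ρ
  have h2 : ρ ^ (e - 1/2 : ℝ) = ρ ^ e / ρ ^ (1/2:ℝ) := Real.rpow_sub hρ e (1/2)
  have h3 : ρ ^ (1/2:ℝ) ≠ 0 := by positivity
  rw [h1, h2]
  field_simp

/-- Pointwise identity for the radial Schrödinger operator in the variable `ρ = r²`:
`-r^{1-d}(r^{d-1}u')' + (c²+n(n+d-2))r^{-2} u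
  = -4 r^{1-d/2-β} (ρ^{β+1} w')'|_{ρ=r²}`,
where `β = √(c² + (n+d/2-1)²)` and `w(ρ) = ρ^{(d/2-1-β)/2} u(√ρ)`. -/
theorem radial_operator_merge_rho (d : ℕ) (hd : 2 ≤ d) (n : ℕ) (c : ℝ) (β : ℝ)
    (hβ : β = Real.sqrt (c ^ 2 + ((n : ℝ) + (d : ℝ) / 2 - 1) ^ 2))
    (u : ℝ → ℝ)
    (hu : ∀ x ∈ Set.Ioi (0:ℝ), DifferentiableAt ℝ u x)
    (hu' : ∀ x ∈ Set.Ioi (0:ℝ), DifferentiableAt ℝ (deriv u) x)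
    (w : ℝ → ℝ)
    (hw : ∀ ρ ∈ Set.Ioi (0:ℝ), w ρ = ρ ^ (((d : ℝ) / 2 - 1 - β) / 2) * u (Real.sqrt ρ))
    (r : ℝ) (hr : 0 < r) :
    -r ^ (1 - (d : ℝ)) * deriv (fun s => s ^ ((d : ℝ) - 1) * deriv u s) r
      + (c ^ 2 + (n : ℝ) * ((n : ℝ) + (d : ℝ) - 2)) * r ^ (-2 : ℝ) * u r
    = -4 * r ^ (1 - (d : ℝ) / 2 - β) *
        deriv (fun ρ => ρ ^ (β + 1) * deriv w ρ) (r ^ 2) := by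
  set α : ℝ := ((d : ℝ) / 2 - 1 - β) / 2 with hα
  have hβ2 : β ^ 2 = c ^ 2 + ((n : ℝ) + (d : ℝ) / 2 - 1) ^ 2 := by
    rw [hβ]; exact Real.sq_sqrt (by positivity)
  have hr2 : (0:ℝ) < r ^ 2 := by positivity
  -- derivative of w on Ioi 0
  have hwderiv : ∀ ρ ∈ Set.Ioi (0:ℝ),
      deriv w ρ = α * ρ ^ (α - 1) * u (Real.sqrt ρ)
        + ρ ^ (α - 1/2) / 2 * deriv u (Real.sqrt ρ) := by
    intro ρ hρ
    have heq : w =ᶠ[nhds ρ] fun t => t ^ α * u (Real.sqrt t) :=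
      Filter.eventuallyEq_of_mem (isOpen_Ioi.mem_nhds hρ) hw
    exact ((aux_rpow_sqrt u hu α ρ hρ).congr_of_eventuallyEq heq).deriv
  -- derivative of ρ ↦ ρ^(β+1) * deriv w ρ at r^2
  have hFeq : (fun ρ => ρ ^ (β + 1) * deriv w ρ)
      =ᶠ[nhds (r ^ 2)] fun ρ => α * (ρ ^ (β + α) * u (Real.sqrt ρ))
        + (1/2) * (ρ ^ (β + α + 1/2) * deriv u (Real.sqrt ρ)) := by
    apply Filter.eventuallyEq_of_mem (isOpen_Ioi.mem_nhds (Set.mem_Ioi.2 hr2))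
    intro ρ hρ
    show ρ ^ (β + 1) * deriv w ρ = α * (ρ ^ (β + α) * u (Real.sqrt ρ))
      + 1/2 * (ρ ^ (β + α + 1/2) * deriv u (Real.sqrt ρ))
    rw [hwderiv ρ hρ]
    have hρ' : (0:ℝ) < ρ := hρ
    rw [mul_add, show ρ ^ (β+1) * (α * ρ ^ (α-1) * u (Real.sqrt ρ))
        = α * ((ρ ^ (β+1) * ρ ^ (α-1)) * u (Real.sqrt ρ)) from by ring,
      ← Real.rpow_add hρ', show β + 1 + (α - 1) = β + α from by ring,
      show ρ ^ (β+1) * (ρ ^ (α - 1/2) / 2 * deriv u (Real.sqrt ρ))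
        = (1/2) * ((ρ ^ (β+1) * ρ ^ (α - 1/2)) * deriv u (Real.sqrt ρ)) from by ring,
      ← Real.rpow_add hρ', show β + 1 + (α - 1/2) = β + α + 1/2 from by ring]
  have hG : HasDerivAt (fun ρ => ρ ^ (β + 1) * deriv w ρ)
      (α * ((β + α) * (r^2) ^ (β + α - 1) * u (Real.sqrt (r^2))
          + (r^2) ^ (β + α - 1/2) / 2 * deriv u (Real.sqrt (r^2)))
        + (1/2) * ((β + α + 1/2) * (r^2) ^ (β + α + 1/2 - 1) * deriv u (Real.sqrt (r^2))
          + (r^2) ^ (β + α + 1/2 - 1/2) / 2 * deriv (deriv u) (Real.sqrt (r^2)))) (r^2) := by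
    exact (((aux_rpow_sqrt u hu (β + α) _ hr2).const_mul α).add
      ((aux_rpow_sqrt (deriv u) hu' (β + α + 1/2) _ hr2).const_mul (1/2))).congr_of_eventuallyEq
      hFeq
  have hL : HasDerivAt (fun s => s ^ ((d : ℝ) - 1) * deriv u s)
      (((d:ℝ) - 1) * r ^ ((d:ℝ) - 1 - 1) * deriv u r + r ^ ((d:ℝ) - 1) * deriv (deriv u) r) r :=
    (Real.hasDerivAt_rpow_const (p := (d:ℝ) - 1) (Or.inl hr.ne')).mul
      (hu' r (Set.mem_Ioi.2 hr)).hasDerivAt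
  rw [hL.deriv, hG.deriv, Real.sqrt_sq hr.le]
  have key : ∀ e : ℝ, (r ^ 2 : ℝ) ^ e = r ^ (2 * e) := by
    intro e
    rw [← Real.rpow_natCast r 2, ← Real.rpow_mul hr.le]
    norm_num
  rw [key, key, key, key]
  have hA1 : r ^ (1 - (d:ℝ)) * r ^ ((d:ℝ) - 1 - 1) = r ^ (-1:ℝ) := by
    rw [← Real.rpow_add hr]; ring_nf
  have hA2 : r ^ (1 - (d:ℝ)) * r ^ ((d:ℝ) - 1) = 1 := by
    rw [← Real.rpow_add hr, show 1 - (d:ℝ) + ((d:ℝ) - 1) = 0 from by ring, Real.rpow_zero]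
  have hB1 : r ^ (1 - (d:ℝ)/2 - β) * r ^ (2 * (β + α - 1)) = r ^ (-2:ℝ) := by
    rw [← Real.rpow_add hr, hα]; ring_nf
  have hB2 : r ^ (1 - (d:ℝ)/2 - β) * r ^ (2 * (β + α - 1/2)) = r ^ (-1:ℝ) := by
    rw [← Real.rpow_add hr, hα]; ring_nf
  have hB3 : r ^ (1 - (d:ℝ)/2 - β) * r ^ (2 * (β + α + 1/2 - 1)) = r ^ (-1:ℝ) := by
    rw [← Real.rpow_add hr, hα]; ring_nf
  have hB4 : r ^ (1 - (d:ℝ)/2 - β) * r ^ (2 * (β + α + 1/2 - 1/2)) = 1 := by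
    rw [← Real.rpow_add hr, hα,
      show 1 - (d:ℝ)/2 - β + 2 * (β + ((d:ℝ)/2 - 1 - β)/2 + 1/2 - 1/2) = 0 from by ring,
      Real.rpow_zero]
  linear_combination (-((d:ℝ) - 1) * deriv u r) * hA1 + (-(deriv (deriv u) r)) * hA2
    + (4 * α * (β + α) * u r) * hB1 + (2 * α * deriv u r) * hB2
    + (2 * (β + α + 1/2) * deriv u r) * hB3 + (deriv (deriv u) r) * hB4
    + (- r ^ (-2:ℝ) * u r) * hβ2
end
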